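/- Let S be a superisolated surface singularity in ℂ³ with tangent cone a reduced plane curve C_d of degree d having irreducible components of degrees δ₁, …, δ_s. Then the determinant of S (the absolute value of the determinant of the intersection matrix of a resolution) equals (d+1)^{s−1} · δ₁ ⋯ δ_s. In particular, if C_d is irreducible, det S = d. -/

import Mathlib

open Finset Matrix in
lemma det_superisolated_aux (s : ℕ) (δ : Fin s → ℚ) (hδ : ∀ i, 0 < δ i) :
    (Matrix.of fun i j : Fin s =>
        if i = j then δ i * ((∑ l, δ l) - δ i + 1) else -(δ i * δ j)).det =
      ((∑ l, δ l) + 1) ^ (s - 1) * ∏ i, δ i := by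
  set d : ℚ := ∑ l, δ l with hd
  have hd0 : 0 ≤ d := Finset.sum_nonneg fun i _ => (hδ i).le
  have hd1 : d + 1 ≠ 0 := by positivity
  have key : (Matrix.of fun i j : Fin s =>
        if i = j then δ i * (d - δ i + 1) else -(δ i * δ j)) =
      Matrix.diagonal δ *
        ((d + 1) • (1 + Matrix.replicateCol Unit (fun _ => -(d+1)⁻¹) * Matrix.replicateRow Unit δ)) := by
    ext i j
    rw [Matrix.diagonal_mul]
    simp only [Matrix.smul_apply, Matrix.add_apply, Matrix.one_apply,
      Matrix.mul_apply, Matrix.replicateCol_apply, Matrix.replicateRow_apply, Finset.sum_const,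
      Finset.card_univ, Fintype.card_unit, one_smul, Matrix.of_apply, smul_eq_mul]
    by_cases h : i = j
    · simp only [h, if_true]
      field_simp
      ring
    · simp only [h, if_false]
      field_simp
      ring
  rw [key, Matrix.det_mul, Matrix.det_diagonal, Matrix.det_smul,
    Matrix.det_one_add_replicateCol_mul_replicateRow]
  have : δ ⬝ᵥ (fun _ => -(d+1)⁻¹) = -(d * (d+1)⁻¹) := by
    simp [dotProduct, ← Finset.sum_mul, ← hd, neg_mul, mul_comm]
  rw [this]
  have h2 : (1 : ℚ) - d * (d+1)⁻¹ = (d+1)⁻¹ := by field_simp; ring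
  rw [sub_eq_add_neg] at h2
  rw [h2]
  rcases s with _ | n
  · simp [hd]
  · simp only [Fintype.card_fin, Nat.add_sub_cancel, pow_succ]
    field_simp

open Finset in
/-- Corollary (cor:sis): for a superisolated singularity S whose tangent cone C_d has
irreducible components of degrees δ₁, …, δ_s (so d = δ₁ + ⋯ + δ_s), the intersection matrix
A of the resolution by one blow-up has diagonal entries −δᵢ(d − δᵢ + 1) and off-diagonal
entries δᵢδⱼ, and det S = det(−A) = (d+1)^{s−1} · δ₁ ⋯ δ_s.  In particular, if C_d is
irreducible (s = 1), then det S = d. -/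
theorem det_superisolated (s : ℕ) (hs : 0 < s) (δ : Fin s → ℕ) (hδ : ∀ i, 0 < δ i) :
    (-(Matrix.of fun i j : Fin s =>
        if i = j then -((δ i : ℤ) * ((∑ l, (δ l : ℤ)) - δ i + 1))
        else (δ i : ℤ) * δ j)).det =
      ((∑ l, (δ l : ℤ)) + 1) ^ (s - 1) * ∏ i, (δ i : ℤ) ∧
    (s = 1 →
      (-(Matrix.of fun i j : Fin s =>
          if i = j then -((δ i : ℤ) * ((∑ l, (δ l : ℤ)) - δ i + 1))
          else (δ i : ℤ) * δ j)).det = ∑ l, (δ l : ℤ)) := by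
  have main : (-(Matrix.of fun i j : Fin s =>
        if i = j then -((δ i : ℤ) * ((∑ l, (δ l : ℤ)) - δ i + 1))
        else (δ i : ℤ) * δ j)).det =
      ((∑ l, (δ l : ℤ)) + 1) ^ (s - 1) * ∏ i, (δ i : ℤ) := by
    have haux := det_superisolated_aux s (fun i => (δ i : ℚ)) (fun i => by
      simpa using (Nat.cast_pos.mpr (hδ i) : (0:ℚ) < δ i))
    have hmap : (Int.castRingHom ℚ).mapMatrix
        (-(Matrix.of fun i j : Fin s =>
          if i = j then -((δ i : ℤ) * ((∑ l, (δ l : ℤ)) - δ i + 1))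
          else (δ i : ℤ) * δ j)) =
        (Matrix.of fun i j : Fin s =>
          if i = j then (δ i : ℚ) * ((∑ l, (δ l : ℚ)) - δ i + 1)
          else -((δ i : ℚ) * δ j)) := by
      ext i j
      by_cases h : i = j <;> simp [h]
    have hdet := congrArg Matrix.det hmap
    rw [← RingHom.map_det] at hdet
    apply (Int.cast_injective (α := ℚ))
    calc ((((-(Matrix.of fun i j : Fin s =>
          if i = j then -((δ i : ℤ) * ((∑ l, (δ l : ℤ)) - δ i + 1))
          else (δ i : ℤ) * δ j)).det : ℤ)) : ℚ)
        = (Matrix.of fun i j : Fin s =>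
          if i = j then (δ i : ℚ) * ((∑ l, (δ l : ℚ)) - δ i + 1)
          else -((δ i : ℚ) * δ j)).det := hdet
      _ = ((∑ l, (δ l : ℚ)) + 1) ^ (s - 1) * ∏ i, (δ i : ℚ) := haux
      _ = ((((∑ l, (δ l : ℤ)) + 1) ^ (s - 1) * ∏ i, (δ i : ℤ) : ℤ) : ℚ) := by
          push_cast; ring
  refine ⟨main, fun h1 => ?_⟩
  subst h1
  rw [main]
  simp [Fin.prod_univ_one, Fin.sum_univ_one]
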